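/- Let f ∈ H¹((0,L); (ℝ²)ⁿ) satisfy G₀(f) := π ∫₀^L ( ½|f′|² − ∑_{i≠j} log|f_i − f_j| ) dz ≤ c₂ and ∫₀^L ∑_i |f_i(z)| dz ≤ c₁. Then ‖f‖_{H¹((0,L))} ≤ C(c₁, c₂, n, L). -/

import Mathlib

noncomputable section

open MeasureTheory

/-- Configuration space of `n` planar points, with the ℓ²-product inner product. -/
abbrev Cfg (n : ℕ) := PiLp 2 (fun _ : Fin n => EuclideanSpace ℝ (Fin 2))

/-- The renormalized interaction energy `W(a) = −∑_{i≠j} log|a_i − a_j|`. -/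
def Wc (n : ℕ) (a : Cfg n) : ℝ :=
  -∑ i, ∑ j, if i = j then (0 : ℝ) else Real.log (dist (a i) (a j))

lemma cfg_norm_le_sum {n : ℕ} (a : Cfg n) : ‖a‖ ≤ ∑ i, ‖a i‖ := by
  have h1 : ‖a‖ ^ 2 = ∑ i, ‖a i‖ ^ 2 := PiLp.norm_sq_eq_of_L2 _ a
  have h2 : ∑ i, ‖a i‖ ^ 2 ≤ (∑ i, ‖a i‖) ^ 2 :=
    Finset.sum_sq_le_sq_sum_of_nonneg fun i _ => norm_nonneg _
  have h3 : (0:ℝ) ≤ ∑ i, ‖a i‖ := Finset.sum_nonneg fun i _ => norm_nonneg _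
  nlinarith [norm_nonneg a]

lemma neg_Wc_le {n : ℕ} (a : Cfg n) : -Wc n a ≤ 2 * n * ∑ i, ‖a i‖ := by
  unfold Wc
  rw [neg_neg]
  calc (∑ i, ∑ j, if i = j then (0:ℝ) else Real.log (dist (a i) (a j)))
      ≤ ∑ i, ∑ j : Fin n, (‖a i‖ + ‖a j‖) := by
        refine Finset.sum_le_sum fun i _ => Finset.sum_le_sum fun j _ => ?_
        split_ifs with h
        · positivity
        · exact le_trans (Real.log_le_self dist_nonneg) (dist_le_norm_add_norm _ _)
    _ = 2 * n * ∑ i, ‖a i‖ := by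
        simp [Finset.sum_add_distrib, Finset.sum_const, Finset.card_univ,
          ← Finset.mul_sum]
        ring


/-- an `H¹` bound from the Hamiltonian bound `G₀(f) ≤ c₂` and the `L¹` bound
`∫ ∑_i |f_i| ≤ c₁`: `‖f‖_{H¹((0,L))}² ≤ C(c₁, c₂, n, L)`. -/
theorem stmt14 (n : ℕ) (L c₁ c₂ : ℝ) (hL : 0 < L) :
    ∃ C > 0, ∀ f : ℝ → Cfg n,
      ContDiff ℝ 1 f →
      IntegrableOn (fun z => ‖deriv f z‖ ^ 2) (Set.Ioo 0 L) →
      IntegrableOn (fun z => (1 / 2) * ‖deriv f z‖ ^ 2 + Wc n (f z)) (Set.Ioo 0 L) →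
      Real.pi * (∫ z in Set.Ioo 0 L, ((1 / 2) * ‖deriv f z‖ ^ 2 + Wc n (f z))) ≤ c₂ →
      (∫ z in Set.Ioo 0 L, ∑ i, ‖f z i‖) ≤ c₁ →
      (∫ z in Set.Ioo 0 L, (‖f z‖ ^ 2 + ‖deriv f z‖ ^ 2)) ≤ C := by
  have hpi := Real.pi_pos
  set B : ℝ := max (2 * (c₂ / Real.pi + 2 * n * |c₁|)) 0 with hBdef
  have hB0 : 0 ≤ B := le_max_right _ _
  refine ⟨|c₁| * (|c₁| / L + (L + B) / 2) + B + 1, by positivity, ?_⟩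
  intro f hf hint1 hint2 hG hL1
  have hmes : MeasurableSet (Set.Ioo (0:ℝ) L) := measurableSet_Ioo
  have hcont : Continuous f := hf.continuous
  have hcd : Continuous (deriv f) := hf.continuous_deriv le_rfl
  have hvol : (volume (Set.Ioo (0:ℝ) L)).toReal = L := by
    rw [Real.volume_Ioo]; simp [ENNReal.toReal_ofReal hL.le]
  -- integrability facts
  have hIsum : IntegrableOn (fun z => ∑ i, ‖f z i‖) (Set.Ioo 0 L) := by
    refine (Continuous.integrableOn_Icc ?_).mono_set Set.Ioo_subset_Icc_self
    exact continuous_finset_sum _ fun i _ => ((PiLp.continuous_apply 2 _ i).comp hcont).norm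
  have hIf : IntegrableOn (fun z => ‖f z‖) (Set.Ioo 0 L) :=
    (hcont.norm.integrableOn_Icc).mono_set Set.Ioo_subset_Icc_self
  have hIf2 : IntegrableOn (fun z => ‖f z‖ ^ 2) (Set.Ioo 0 L) :=
    ((hcont.norm.pow 2).integrableOn_Icc).mono_set Set.Ioo_subset_Icc_self
  have hIdn : IntegrableOn (fun z => ‖deriv f z‖) (Set.Ioo 0 L) :=
    (hcd.norm.integrableOn_Icc).mono_set Set.Ioo_subset_Icc_self
  have hIW : IntegrableOn (fun z => Wc n (f z)) (Set.Ioo 0 L) := by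
    have h := hint2.sub (hint1.const_mul (1/2))
    exact h.congr (Filter.Eventually.of_forall fun z => by
      simp only [Pi.sub_apply]; ring)
  -- c₁ is nonnegative
  have hc₁ : 0 ≤ c₁ :=
    le_trans (setIntegral_nonneg hmes fun x _ => Finset.sum_nonneg fun i _ => norm_nonneg _) hL1
  have habs : |c₁| = c₁ := abs_of_nonneg hc₁
  -- Step 1: bound on ∫ ‖f'‖²
  have hK2 : (∫ z in Set.Ioo 0 L, ‖deriv f z‖ ^ 2) ≤ B := by
    have h1 : (∫ z in Set.Ioo 0 L, ((1/2) * ‖deriv f z‖ ^ 2 + Wc n (f z))) ≤ c₂ / Real.pi := by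
      rw [le_div_iff₀ hpi]; linarith
    have h2 : (∫ z in Set.Ioo 0 L, -Wc n (f z)) ≤ 2 * n * c₁ := by
      calc (∫ z in Set.Ioo 0 L, -Wc n (f z))
          ≤ ∫ z in Set.Ioo 0 L, 2 * n * ∑ i, ‖f z i‖ :=
            setIntegral_mono_on hIW.neg (hIsum.const_mul _) hmes fun x _ => neg_Wc_le _
        _ = 2 * n * ∫ z in Set.Ioo 0 L, ∑ i, ‖f z i‖ := integral_const_mul _ _
        _ ≤ 2 * n * c₁ := by
            have : (0:ℝ) ≤ 2 * n := by positivity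
            exact mul_le_mul_of_nonneg_left hL1 this
    have hsplit : (∫ z in Set.Ioo 0 L, ((1/2) * ‖deriv f z‖ ^ 2 + Wc n (f z)))
        = (1/2) * (∫ z in Set.Ioo 0 L, ‖deriv f z‖ ^ 2) + ∫ z in Set.Ioo 0 L, Wc n (f z) := by
      rw [integral_add (hint1.const_mul _) hIW, integral_const_mul]
    have hnegW : (∫ z in Set.Ioo 0 L, -Wc n (f z)) = -∫ z in Set.Ioo 0 L, Wc n (f z) :=
      integral_neg _
    have : (∫ z in Set.Ioo 0 L, ‖deriv f z‖ ^ 2) ≤ 2 * (c₂ / Real.pi + 2 * n * |c₁|) := by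
      rw [habs]; linarith
    exact le_trans this (le_max_left _ _)
  -- Step 2: bound on ∫ ‖f'‖
  have hK1 : (∫ z in Set.Ioo 0 L, ‖deriv f z‖) ≤ (L + B) / 2 := by
    have h1 : (∫ z in Set.Ioo 0 L, ‖deriv f z‖)
        ≤ ∫ z in Set.Ioo 0 L, (1/2 + (1/2) * ‖deriv f z‖ ^ 2) := by
      refine setIntegral_mono_on hIdn ((integrableOn_const ?_).add
        (hint1.const_mul _)) hmes fun x _ => by nlinarith [sq_nonneg (‖deriv f x‖ - 1)]
      rw [Real.volume_Ioo]; exact ENNReal.ofReal_ne_top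
    have h2 : (∫ z in Set.Ioo 0 L, (1/2 + (1/2) * ‖deriv f z‖ ^ 2))
        = (1/2) * L + (1/2) * ∫ z in Set.Ioo 0 L, ‖deriv f z‖ ^ 2 := by
      rw [integral_add (integrableOn_const (C := (1/2 : ℝ)) (by rw [Real.volume_Ioo]; exact ENNReal.ofReal_ne_top)) (hint1.const_mul _),
        integral_const_mul, setIntegral_const, measureReal_def, hvol, smul_eq_mul, mul_comm]
    linarith
  -- Step 3: sup bound
  have hKey : ∀ z ∈ Set.Ioo (0:ℝ) L, ∀ y ∈ Set.Ioo (0:ℝ) L,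
      ‖f z‖ ≤ ‖f y‖ + ∫ t in Set.Ioo 0 L, ‖deriv f t‖ := by
    intro z hz y hy
    have hftc : (∫ t in y..z, deriv f t) = f z - f y :=
      intervalIntegral.integral_deriv_eq_sub
        (fun x _ => (hf.differentiable one_ne_zero).differentiableAt)
        (hcd.intervalIntegrable y z)
    have h5 : ‖f z - f y‖ ≤ ∫ t in Set.uIoc y z, ‖deriv f t‖ := by
      rw [← hftc]; exact intervalIntegral.norm_integral_le_integral_norm_uIoc
    have hsub : Set.uIoc y z ⊆ Set.Ioo 0 L := by
      intro t ht
      rcases Set.mem_uIoc.mp ht with ⟨h, h'⟩ | ⟨h, h'⟩ <;>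
        exact ⟨by linarith [hy.1, hz.1], by linarith [hy.2, hz.2]⟩
    have h6 : (∫ t in Set.uIoc y z, ‖deriv f t‖) ≤ ∫ t in Set.Ioo 0 L, ‖deriv f t‖ :=
      setIntegral_mono_set hIdn (ae_of_all _ fun t => norm_nonneg _)
        (HasSubset.Subset.eventuallyLE hsub)
    have h7 : ‖f z‖ - ‖f y‖ ≤ ‖f z - f y‖ := norm_sub_norm_le _ _
    linarith
  have hIntf : (∫ z in Set.Ioo 0 L, ‖f z‖) ≤ c₁ := by
    calc (∫ z in Set.Ioo 0 L, ‖f z‖) ≤ ∫ z in Set.Ioo 0 L, ∑ i, ‖f z i‖ :=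
          setIntegral_mono_on hIf hIsum hmes fun x _ => cfg_norm_le_sum _
      _ ≤ c₁ := hL1
  have hM : ∀ z ∈ Set.Ioo (0:ℝ) L, ‖f z‖ ≤ c₁ / L + (L + B) / 2 := by
    intro z hz
    set K : ℝ := ∫ t in Set.Ioo 0 L, ‖deriv f t‖ with hKdef
    have h8 : L * ‖f z‖ ≤ c₁ + L * K := by
      have h9 : (∫ _y in Set.Ioo (0:ℝ) L, ‖f z‖) = L * ‖f z‖ := by
        rw [setIntegral_const, measureReal_def, hvol, smul_eq_mul]
      have h10 : (∫ y in Set.Ioo (0:ℝ) L, (‖f y‖ + K))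
          = (∫ y in Set.Ioo 0 L, ‖f y‖) + L * K := by
        rw [integral_add hIf (integrableOn_const (by rw [Real.volume_Ioo]; exact ENNReal.ofReal_ne_top)),
          setIntegral_const, measureReal_def, hvol, smul_eq_mul]
      have h11 : (∫ _y in Set.Ioo (0:ℝ) L, ‖f z‖) ≤ ∫ y in Set.Ioo (0:ℝ) L, (‖f y‖ + K) := by
        refine setIntegral_mono_on (integrableOn_const (by rw [Real.volume_Ioo]; exact ENNReal.ofReal_ne_top))
          (hIf.add (integrableOn_const (by rw [Real.volume_Ioo]; exact ENNReal.ofReal_ne_top))) hmes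
          fun y hy => hKey z hz y hy
        -- note hKey gives bound with K
      rw [h9] at h11
      rw [h10] at h11
      linarith
    have hKb : K ≤ (L + B) / 2 := hK1
    have h12 : L * ‖f z‖ ≤ c₁ + L * ((L + B) / 2) := by nlinarith
    have h13 : c₁ / L + (L + B) / 2 = (c₁ + L * ((L + B) / 2)) / L := by
      field_simp
    rw [h13, le_div_iff₀ hL]
    linarith [h12, mul_comm (‖f z‖) L]
  -- Step 4: conclude
  have hMnn : 0 ≤ c₁ / L + (L + B) / 2 := by positivity
  have hF2 : (∫ z in Set.Ioo 0 L, ‖f z‖ ^ 2) ≤ (c₁ / L + (L + B) / 2) * c₁ := by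
    calc (∫ z in Set.Ioo 0 L, ‖f z‖ ^ 2)
        ≤ ∫ z in Set.Ioo 0 L, (c₁ / L + (L + B) / 2) * ‖f z‖ := by
          refine setIntegral_mono_on hIf2 (hIf.const_mul _) hmes fun x hx => ?_
          have := hM x hx
          nlinarith [norm_nonneg (f x)]
      _ = (c₁ / L + (L + B) / 2) * ∫ z in Set.Ioo 0 L, ‖f z‖ := integral_const_mul _ _
      _ ≤ (c₁ / L + (L + B) / 2) * c₁ := mul_le_mul_of_nonneg_left hIntf hMnn
  have hfin : (∫ z in Set.Ioo 0 L, (‖f z‖ ^ 2 + ‖deriv f z‖ ^ 2))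
      = (∫ z in Set.Ioo 0 L, ‖f z‖ ^ 2) + ∫ z in Set.Ioo 0 L, ‖deriv f z‖ ^ 2 :=
    integral_add hIf2 hint1
  rw [hfin, habs]
  linarith
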